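/- Let a, b, x : ℕ → ℂ with b_i ≠ 0 for all i, and suppose x satisfies x_{n+2} = b_n·x_{n+1} + a_n·x_n for all n ∈ ℕ. Suppose moreover that x_n/(∏_{i=0}^{n-2} b_i) → 0 as n → ∞, that the partial sparse sums D_n = Σ_{S ∈ Sp(1,n)} g^S converge to some D ∈ ℂ, and that the partial sparse sums N_n = Σ_{S ∈ Sp(2,n)} g^S converge to some N ∈ ℂ. Then x_1·D + x_0·(a_0/b_0)·N = 0; in particular, if also x_0 ≠ 0 and D ≠ 0, then -x_1/x_0 = (a_0/b_0)·N/D. -/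

import Mathlib

open Finset Filter Topology

/-- `Sp q m` is the collection of all sparse subsets of `{q, q+1, …, m}`
(sparse: any two distinct elements differ by at least 2). -/
def Sp (q m : ℕ) : Finset (Finset ℕ) :=
  (Finset.Icc q m).powerset.filter (fun S => ∀ i ∈ S, ∀ j ∈ S, i < j → 2 ≤ j - i)

/-- `g a b i = a i / (b (i-1) * b i)`. -/
noncomputable def g (a b : ℕ → ℂ) (i : ℕ) : ℂ := a i / (b (i - 1) * b i)

/-- `gProd a b S = ∏ i ∈ S, g a b i` (the empty product is 1). -/
noncomputable def gProd (a b : ℕ → ℂ) (S : Finset ℕ) : ℂ := ∏ i ∈ S, g a b i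

lemma Sp_succ_succ (q n : ℕ) (hq : q ≤ n + 2) :
    Sp q (n + 2) = Sp q (n + 1) ∪ (Sp q n).image (insert (n + 2)) := by
  ext S
  simp only [Sp, Finset.mem_union, Finset.mem_image, Finset.mem_filter, Finset.mem_powerset]
  constructor
  · rintro ⟨hsub, hsp⟩
    by_cases h : n + 2 ∈ S
    · right
      refine ⟨S.erase (n + 2), ⟨⟨?_, ?_⟩, ?_⟩⟩
      · intro i hi
        have hi1 := Finset.mem_of_mem_erase hi
        have hi2 : i ≠ n + 2 := Finset.ne_of_mem_erase hi
        have h3 := hsub hi1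
        rw [Finset.mem_Icc] at h3 ⊢
        have h4 : i < n + 2 := by omega
        have := hsp i hi1 (n + 2) h h4
        omega
      · intro i hi j hj hij
        exact hsp i (Finset.mem_of_mem_erase hi) j (Finset.mem_of_mem_erase hj) hij
      · exact Finset.insert_erase h
    · left
      refine ⟨?_, hsp⟩
      intro i hi
      have h3 := hsub hi
      rw [Finset.mem_Icc] at h3 ⊢
      have : i ≠ n + 2 := fun he => h (he ▸ hi)
      omega
  · rintro (⟨hsub, hsp⟩ | ⟨T, ⟨⟨hTsub, hTsp⟩, rfl⟩⟩)
    · exact ⟨hsub.trans (Finset.Icc_subset_Icc_right (by omega)), hsp⟩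
    · constructor
      · intro i hi
        rcases Finset.mem_insert.mp hi with rfl | hi
        · rw [Finset.mem_Icc]; omega
        · have := hTsub hi
          rw [Finset.mem_Icc] at this ⊢
          omega
      · intro i hi j hj hij
        rcases Finset.mem_insert.mp hi with rfl | hi <;>
          rcases Finset.mem_insert.mp hj with rfl | hj
        · omega
        · have := (Finset.mem_Icc.mp (hTsub hj)).2; omega
        · have := (Finset.mem_Icc.mp (hTsub hi)).2; omega
        · exact hTsp i hi j hj hij

lemma not_mem_of_mem_Sp {q m : ℕ} {S : Finset ℕ} (hS : S ∈ Sp q m) {k : ℕ} (hk : m < k) :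
    k ∉ S := by
  intro hkS
  have := Finset.mem_Icc.mp ((Finset.mem_powerset.mp (Finset.mem_filter.mp hS).1) hkS)
  omega

lemma sp_sum_rec (a b : ℕ → ℂ) (q n : ℕ) (hq : q ≤ n + 2) :
    ∑ S ∈ Sp q (n + 2), gProd a b S
      = ∑ S ∈ Sp q (n + 1), gProd a b S + g a b (n + 2) * ∑ S ∈ Sp q n, gProd a b S := by
  rw [Sp_succ_succ q n hq, Finset.sum_union, Finset.sum_image, Finset.mul_sum]
  · congr 1
    refine Finset.sum_congr rfl fun S hS => ?_
    have hnS : n + 2 ∉ S := not_mem_of_mem_Sp hS (by omega)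
    rw [gProd, Finset.prod_insert hnS]
    rfl
  · intro S hS T hT hST
    have hnS : n + 2 ∉ S := not_mem_of_mem_Sp hS (by omega)
    have hnT : n + 2 ∉ T := not_mem_of_mem_Sp hT (by omega)
    have := congrArg (Finset.erase · (n + 2)) hST
    simpa [Finset.erase_insert hnS, Finset.erase_insert hnT] using this
  · rw [Finset.disjoint_left]
    intro S hS hS'
    obtain ⟨T, _, rfl⟩ := Finset.mem_image.mp hS'
    exact not_mem_of_mem_Sp hS (by omega) (Finset.mem_insert_self _ _)

lemma Sp_of_lt {q m : ℕ} (h : m < q) : Sp q m = {∅} := by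
  rw [Sp, Finset.Icc_eq_empty (by omega)]
  decide

lemma key (a b x : ℕ → ℂ) (hb : ∀ i, b i ≠ 0)
    (hx : ∀ n, x (n + 2) = b n * x (n + 1) + a n * x n) (n : ℕ) :
    x (n + 2) = (∏ i ∈ Finset.range (n + 1), b i) *
      (x 1 * ∑ S ∈ Sp 1 n, gProd a b S + x 0 * (a 0 / b 0) * ∑ S ∈ Sp 2 n, gProd a b S) := by
  induction n using Nat.twoStepInduction with
  | zero =>
    have hb0 := hb 0
    have h0 : Sp 1 0 = {∅} := by decide
    have h1 : Sp 2 0 = {∅} := by decide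
    rw [hx 0, h0, h1]
    simp only [Finset.sum_singleton, gProd, Finset.prod_empty, Finset.prod_range_one]
    field_simp
    rw [Finset.prod_range_one]
    ring
  | one =>
    have hb0 := hb 0
    have hb1 := hb 1
    have h0 : Sp 1 1 = {∅, {1}} := by decide
    have h1 : Sp 2 1 = {∅} := by decide
    rw [hx 1, hx 0, h0, h1]
    rw [Finset.sum_pair (show (∅ : Finset ℕ) ≠ {1} by decide)]
    simp only [Finset.sum_singleton, gProd, Finset.prod_empty, Finset.prod_singleton, g]
    norm_num
    rw [Finset.prod_range_succ, Finset.prod_range_one]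
    field_simp
    ring
  | more n ih ih1 =>
    have hb0 := hb 0
    have hb1 := hb (n + 1)
    have hb2 := hb (n + 2)
    have hg : g a b (n + 2) = a (n + 2) / (b (n + 1) * b (n + 2)) := rfl
    have ih1' : x (n + 2 + 1) = ((∏ i ∈ Finset.range (n + 1), b i) * b (n + 1)) *
        (x 1 * ∑ S ∈ Sp 1 (n + 1), gProd a b S
          + x 0 * (a 0 / b 0) * ∑ S ∈ Sp 2 (n + 1), gProd a b S) := by
      rw [show n + 2 + 1 = n + 1 + 2 from rfl, ih1, Finset.prod_range_succ]
    rw [hx (n + 2), ih1', ih,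
      sp_sum_rec a b 1 n (by omega), sp_sum_rec a b 2 n (by omega),
      show (∏ i ∈ Finset.range (n + 2 + 1), b i)
          = (∏ i ∈ Finset.range (n + 1), b i) * b (n + 1) * b (n + 2) by
        rw [Finset.prod_range_succ, Finset.prod_range_succ],
      hg]
    field_simp
    ring

/-- If a solution of the difference equation is such that
`x n / ∏_{i=0}^{n-2} b i → 0` and the partial sparse sums converge, then
`x 1 * D + x 0 * (a 0 / b 0) * N = 0`; in particular, if `x 0 ≠ 0` and `D ≠ 0`,
then `-x 1 / x 0 = (a 0 / b 0) * N / D`. -/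
theorem minimal_solution_ratio (a b x : ℕ → ℂ) (hb : ∀ i, b i ≠ 0)
    (hx : ∀ n, x (n + 2) = b n * x (n + 1) + a n * x n)
    (hzero : Tendsto (fun n => x n / ∏ i ∈ Finset.range (n - 1), b i) atTop (𝓝 0))
    (D N : ℂ)
    (hDlim : Tendsto (fun n => ∑ S ∈ Sp 1 n, gProd a b S) atTop (𝓝 D))
    (hNlim : Tendsto (fun n => ∑ S ∈ Sp 2 n, gProd a b S) atTop (𝓝 N)) :
    x 1 * D + x 0 * (a 0 / b 0) * N = 0 ∧
      (x 0 ≠ 0 → D ≠ 0 → -x 1 / x 0 = (a 0 / b 0) * N / D) := by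
  have hprod : ∀ n : ℕ, (∏ i ∈ Finset.range (n + 1), b i) ≠ 0 :=
    fun n => Finset.prod_ne_zero_iff.mpr fun i _ => hb i
  have h1 : Tendsto (fun n => x (n + 2) / ∏ i ∈ Finset.range (n + 1), b i) atTop (𝓝 0) := by
    have := hzero.comp (tendsto_add_atTop_nat 2)
    simpa [Function.comp_def] using this
  have h2 : ∀ n : ℕ, x (n + 2) / ∏ i ∈ Finset.range (n + 1), b i
      = x 1 * ∑ S ∈ Sp 1 n, gProd a b S + x 0 * (a 0 / b 0) * ∑ S ∈ Sp 2 n, gProd a b S := by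
    intro n
    rw [key a b x hb hx n, mul_div_assoc', mul_comm, mul_div_assoc,
      div_self (hprod n), mul_one]
  have h3 : Tendsto
      (fun n => x 1 * ∑ S ∈ Sp 1 n, gProd a b S + x 0 * (a 0 / b 0) * ∑ S ∈ Sp 2 n, gProd a b S)
      atTop (𝓝 (x 1 * D + x 0 * (a 0 / b 0) * N)) :=
    (hDlim.const_mul _).add (hNlim.const_mul _)
  have heq : x 1 * D + x 0 * (a 0 / b 0) * N = 0 := by
    refine tendsto_nhds_unique ?_ h1
    exact h3.congr fun n => (h2 n).symm
  refine ⟨heq, fun hx0 hD => ?_⟩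
  rw [div_eq_div_iff hx0 hD]
  linear_combination -heq
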